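/- Let P be a uniformly ergodic transition kernel on a nonempty finite set S. Then: (i) for every ε > 0 there exist m' ∈ ℤ_{>0} and p' ∈ (0,1] such that P satisfies the (m',p')-Doeblin condition and m'/p' − ε ≤ t_minorize(P) ≤ m'/p' + ε; and (ii) t_minorize(P) ≤ 22 · t_mix(P) ≤ 22 · log(16) · t_minorize(P). -/

import Mathlib

open Filter

/-- `P` is a transition kernel on the finite set `S`: nonnegative entries, rows sum to 1. -/
def IsKernel {S : Type*} [Fintype S] (P : Matrix S S ℝ) : Prop :=
  (∀ s s', 0 ≤ P s s') ∧ ∀ s, ∑ s', P s s' = 1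

/-- `μ` is a probability distribution on the finite set `S`. -/
def IsProb {S : Type*} [Fintype S] (μ : S → ℝ) : Prop :=
  (∀ s, 0 ≤ μ s) ∧ ∑ s, μ s = 1

/-- Total variation distance between two distributions on a finite set. -/
noncomputable def tvDist {S : Type*} [Fintype S] (μ ν : S → ℝ) : ℝ :=
  (∑ s, |μ s - ν s|) / 2

/-- Uniform ergodicity: `sup_s ‖P^n(s,·) − η‖_TV → 0`. -/
def UnifErgodic {S : Type*} [Fintype S] [DecidableEq S] (P : Matrix S S ℝ) (η : S → ℝ) : Prop :=
  Tendsto (fun n : ℕ => ⨆ s, tvDist ((P ^ n) s) η) atTop (nhds 0)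

/-- The `(m,p)`-Doeblin minorization condition. -/
def Doeblin {S : Type*} [Fintype S] [DecidableEq S] (P : Matrix S S ℝ) (m : ℕ) (p : ℝ) : Prop :=
  ∃ ψ : S → ℝ, IsProb ψ ∧ ∀ s s', p * ψ s' ≤ (P ^ m) s s'

/-- Mixing time: least `t ≥ 1` with `sup_s ‖P^t(s,·) − η‖_TV ≤ 1/4`. -/
noncomputable def tMix {S : Type*} [Fintype S] [DecidableEq S]
    (P : Matrix S S ℝ) (η : S → ℝ) : ℕ :=
  sInf {t : ℕ | 0 < t ∧ ∀ s, tvDist ((P ^ t) s) η ≤ 1 / 4}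

/-- Minorization time: infimum of `m/p` over valid Doeblin pairs `(m,p)`. -/
noncomputable def tMinorize {S : Type*} [Fintype S] [DecidableEq S] (P : Matrix S S ℝ) : ℝ :=
  sInf {x : ℝ | ∃ (m : ℕ) (p : ℝ), 0 < m ∧ 0 < p ∧ p ≤ 1 ∧ Doeblin P m p ∧ x = m / p}

/-- Separation time for a given minorization pair `(p, ψ)`. -/
noncomputable def tSep {S : Type*} [Fintype S] [DecidableEq S]
    (P : Matrix S S ℝ) (p : ℝ) (ψ : S → ℝ) : ℕ :=
  sInf {m : ℕ | 0 < m ∧ ∀ s s', p * ψ s' ≤ (P ^ m) s s'}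

section Aux
variable {S : Type*} [Fintype S] [DecidableEq S]

lemma isKernel_pow {P : Matrix S S ℝ} (hP : IsKernel P) (n : ℕ) : IsKernel (P ^ n) := by
  induction n with
  | zero =>
    refine ⟨fun s s' => ?_, fun s => ?_⟩
    · rw [pow_zero, Matrix.one_apply]; split_ifs <;> norm_num
    · rw [pow_zero]; simp [Matrix.one_apply]
  | succ n ih =>
    rw [pow_succ]
    refine ⟨fun s s' => ?_, fun s => ?_⟩
    · rw [Matrix.mul_apply]
      exact Finset.sum_nonneg fun u _ => mul_nonneg (ih.1 s u) (hP.1 u s')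
    · simp only [Matrix.mul_apply]
      rw [Finset.sum_comm]
      have : ∀ u ∈ Finset.univ, ∑ s', (P ^ n) s u * P u s' = (P ^ n) s u := by
        intro u _
        rw [← Finset.mul_sum, hP.2 u, mul_one]
      rw [Finset.sum_congr rfl this, ih.2 s]

lemma stat_pow {P : Matrix S S ℝ} {η : S → ℝ} (hη : IsProb η)
    (hstat : ∀ s', ∑ s, η s * P s s' = η s') (n : ℕ) :
    ∀ s', ∑ s, η s * (P ^ n) s s' = η s' := by
  induction n with
  | zero =>
    intro s'
    rw [pow_zero]
    simp [Matrix.one_apply, Finset.sum_ite_eq]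
  | succ n ih =>
    intro s'
    rw [pow_succ]
    simp only [Matrix.mul_apply]
    calc ∑ s, η s * ∑ u, (P ^ n) s u * P u s'
        = ∑ u, (∑ s, η s * (P ^ n) s u) * P u s' := by
          simp only [Finset.mul_sum, Finset.sum_mul]
          rw [Finset.sum_comm]
          congr 1; ext s; congr 1; ext u; ring
      _ = ∑ u, η u * P u s' := by
          congr 1; ext u; rw [ih u]
      _ = η s' := hstat s'

lemma tvDist_le_one {μ ν : S → ℝ} (hμ : IsProb μ) (hν : IsProb ν) : tvDist μ ν ≤ 1 := by
  have : ∑ s, |μ s - ν s| ≤ ∑ s, (μ s + ν s) :=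
    Finset.sum_le_sum fun s _ => (abs_sub _ _).trans_eq (by
      rw [abs_of_nonneg (hμ.1 s), abs_of_nonneg (hν.1 s)])
  rw [tvDist]
  rw [Finset.sum_add_distrib, hμ.2, hν.2] at this
  linarith

lemma sum_min_eq {μ ν : S → ℝ} (hμ : IsProb μ) (hν : IsProb ν) :
    ∑ s, min (μ s) (ν s) = 1 - tvDist μ ν := by
  have h : ∀ s, min (μ s) (ν s) = (μ s + ν s - |μ s - ν s|) / 2 := by
    intro s
    rcases le_total (μ s) (ν s) with h | h
    · rw [min_eq_left h, abs_of_nonpos (by linarith)]; ring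
    · rw [min_eq_right h, abs_of_nonneg (by linarith)]; ring
  rw [Finset.sum_congr rfl fun s _ => h s, tvDist]
  rw [Finset.sum_div]
  have : ∑ s, (μ s + ν s - |μ s - ν s|) / 2
      = (∑ s, (μ s + ν s) - ∑ s, |μ s - ν s|) / 2 := by
    rw [← Finset.sum_sub_distrib, Finset.sum_div]
  rw [this, Finset.sum_add_distrib, hμ.2, hν.2]
  rw [← Finset.sum_div]
  ring

end Aux

section Aux2
variable {S : Type*} [Fintype S] [DecidableEq S]

lemma contraction {P : Matrix S S ℝ} (hP : IsKernel P) {η : S → ℝ} (hη : IsProb η)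
    (hstat : ∀ s', ∑ s, η s * P s s' = η s')
    {m : ℕ} {p : ℝ} (hp : 0 < p) (hp1 : p ≤ 1) {ψ : S → ℝ} (hψ : IsProb ψ)
    (hmin : ∀ s s', p * ψ s' ≤ (P ^ m) s s') (k : ℕ) (s : S) :
    tvDist ((P ^ (k * m)) s) η ≤ (1 - p) ^ k := by
  induction k with
  | zero =>
    simpa using tvDist_le_one ⟨(isKernel_pow hP 0).1 s, (isKernel_pow hP 0).2 s⟩ hη
  | succ k ih =>
    have hA := isKernel_pow hP (k * m)
    have hB := isKernel_pow hP m
    have key : ∀ s', (P ^ ((k+1) * m)) s s' - η s'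
        = ∑ u, ((P ^ (k * m)) s u - η u) * ((P ^ m) u s' - p * ψ s') := by
      intro s'
      have h1 : (P ^ ((k+1) * m)) s s' = ∑ u, (P ^ (k * m)) s u * (P ^ m) u s' := by
        rw [show (k+1) * m = k * m + m by ring, pow_add, Matrix.mul_apply]
      have h2 : η s' = ∑ u, η u * (P ^ m) u s' := (stat_pow hη hstat m s').symm
      have h3 : ∑ u, ((P ^ (k * m)) s u - η u) * (p * ψ s') = 0 := by
        rw [← Finset.sum_mul, Finset.sum_sub_distrib, hA.2 s, hη.2, sub_self, zero_mul]
      calc (P ^ ((k+1) * m)) s s' - η s'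
          = ∑ u, ((P ^ (k * m)) s u - η u) * (P ^ m) u s'
              - ∑ u, ((P ^ (k * m)) s u - η u) * (p * ψ s') := by
            rw [h3, sub_zero, h1]
            rw [h2]
            rw [← Finset.sum_sub_distrib]
            congr 1; ext u; ring
        _ = ∑ u, ((P ^ (k * m)) s u - η u) * ((P ^ m) u s' - p * ψ s') := by
            rw [← Finset.sum_sub_distrib]
            congr 1; ext u; ring
    have habs : ∀ s', |(P ^ ((k+1) * m)) s s' - η s'|
        ≤ ∑ u, |(P ^ (k * m)) s u - η u| * ((P ^ m) u s' - p * ψ s') := by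
      intro s'
      rw [key s']
      refine (Finset.abs_sum_le_sum_abs _ _).trans (Finset.sum_le_sum fun u _ => ?_)
      rw [abs_mul, abs_of_nonneg (show (0:ℝ) ≤ (P ^ m) u s' - p * ψ s' by linarith [hmin u s'])]
    have hsum : ∑ s', |(P ^ ((k+1) * m)) s s' - η s'|
        ≤ (1 - p) * ∑ u, |(P ^ (k * m)) s u - η u| := by
      calc ∑ s', |(P ^ ((k+1) * m)) s s' - η s'|
          ≤ ∑ s', ∑ u, |(P ^ (k * m)) s u - η u| * ((P ^ m) u s' - p * ψ s') :=
            Finset.sum_le_sum fun s' _ => habs s'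
        _ = ∑ u, |(P ^ (k * m)) s u - η u| * ∑ s', ((P ^ m) u s' - p * ψ s') := by
            rw [Finset.sum_comm]
            congr 1; ext u
            rw [Finset.mul_sum]
        _ = (1 - p) * ∑ u, |(P ^ (k * m)) s u - η u| := by
            rw [Finset.mul_sum]
            congr 1; ext u
            rw [Finset.sum_sub_distrib, hB.2 u, ← Finset.mul_sum, hψ.2, mul_one]
            ring
    have h2tv : tvDist ((P ^ ((k+1) * m)) s) η ≤ (1 - p) * tvDist ((P ^ (k * m)) s) η := by
      rw [tvDist, tvDist]
      have hnn : (0:ℝ) ≤ 1 - p := by linarith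
      nlinarith [hsum]
    have hk : (0:ℝ) ≤ (1 - p) ^ k := pow_nonneg (by linarith) k
    calc tvDist ((P ^ ((k+1) * m)) s) η ≤ (1 - p) * tvDist ((P ^ (k * m)) s) η := h2tv
      _ ≤ (1 - p) * (1 - p) ^ k := by
          apply mul_le_mul_of_nonneg_left ih (by linarith)
      _ = (1 - p) ^ (k + 1) := by ring

end Aux2

section Aux3
variable {S : Type*} [Fintype S] [DecidableEq S]

lemma doeblin_of_mix {P : Matrix S S ℝ} (hP : IsKernel P) {η : S → ℝ} (hη : IsProb η)
    (t : ℕ) (hmix : ∀ s, tvDist ((P ^ t) s) η ≤ 1 / 4) :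
    Doeblin P (2 * t) (1 / 2) := by
  have hQ := isKernel_pow hP t
  set Q : Matrix S S ℝ := P ^ t with hQdef
  have hQprob : ∀ u, IsProb (Q u) := fun u => ⟨hQ.1 u, hQ.2 u⟩
  set θ : S → S → ℝ := fun u s' => min (Q u s') (η s') with hθ
  have hθnn : ∀ u s', 0 ≤ θ u s' := fun u s' => le_min (hQ.1 u s') (hη.1 s')
  have hθle : ∀ u s', θ u s' ≤ η s' := fun u s' => min_le_right _ _
  have hθleQ : ∀ u s', θ u s' ≤ Q u s' := fun u s' => min_le_left _ _
  have hθsum : ∀ u, (3:ℝ)/4 ≤ ∑ s', θ u s' := by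
    intro u
    rw [hθ]
    rw [sum_min_eq (hQprob u) hη]
    linarith [hmix u]
  have hθsum' : ∀ u, ∑ s', (η s' - θ u s') ≤ 1/4 := by
    intro u
    rw [Finset.sum_sub_distrib, hη.2]
    linarith [hθsum u]
  set M : S → ℝ := fun s' => ∑ u, η u * θ u s' with hM
  set ν : S → ℝ := fun s' => max (M s' - η s' / 4) 0 with hν
  have hνnn : ∀ s', 0 ≤ ν s' := fun s' => le_max_right _ _
  have hMsum : (3:ℝ)/4 ≤ ∑ s', M s' := by
    rw [hM]
    rw [Finset.sum_comm]
    calc (3:ℝ)/4 = ∑ u, η u * (3/4) := by rw [← Finset.sum_mul, hη.2, one_mul]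
      _ ≤ ∑ u, ∑ s', η u * θ u s' := by
          refine Finset.sum_le_sum fun u _ => ?_
          rw [← Finset.mul_sum]
          exact mul_le_mul_of_nonneg_left (hθsum u) (hη.1 u)
  have hZ : (1:ℝ)/2 ≤ ∑ s', ν s' := by
    calc (1:ℝ)/2 = 3/4 - 1/4 := by norm_num
      _ ≤ ∑ s', M s' - ∑ s', η s' / 4 := by
          have : ∑ s', η s' / 4 = 1/4 := by rw [← Finset.sum_div, hη.2]
          linarith [hMsum]
      _ = ∑ s', (M s' - η s' / 4) := by rw [Finset.sum_sub_distrib]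
      _ ≤ ∑ s', ν s' := Finset.sum_le_sum fun s' _ => le_max_left _ _
  set Z : ℝ := ∑ s', ν s' with hZdef
  have hZpos : 0 < Z := lt_of_lt_of_le (by norm_num) hZ
  have hlower : ∀ s s', ν s' ≤ (P ^ (2 * t)) s s' := by
    intro s s'
    have hpow : (P ^ (2 * t)) s s' = ∑ u, Q s u * Q u s' := by
      rw [two_mul, pow_add, Matrix.mul_apply]
    have h1 : ∑ u, θ s u * θ u s' ≤ (P ^ (2 * t)) s s' := by
      rw [hpow]
      exact Finset.sum_le_sum fun u _ => mul_le_mul (hθleQ s u) (hθleQ u s')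
        (hθnn u s') (hQ.1 s u)
    have h2 : M s' - η s' / 4 ≤ ∑ u, θ s u * θ u s' := by
      have expand : ∑ u, θ s u * θ u s' = M s' - ∑ u, (η u - θ s u) * θ u s' := by
        rw [hM, ← Finset.sum_sub_distrib]
        congr 1; ext u; ring
      rw [expand]
      have : ∑ u, (η u - θ s u) * θ u s' ≤ η s' / 4 := by
        calc ∑ u, (η u - θ s u) * θ u s' ≤ ∑ u, (η u - θ s u) * η s' :=
              Finset.sum_le_sum fun u _ => mul_le_mul_of_nonneg_left (hθle u s')
                (by linarith [hθle s u])
          _ = (∑ u, (η u - θ s u)) * η s' := by rw [Finset.sum_mul]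
          _ ≤ 1/4 * η s' := mul_le_mul_of_nonneg_right (hθsum' s) (hη.1 s')
          _ = η s' / 4 := by ring
      linarith
    have h0 : 0 ≤ (P ^ (2 * t)) s s' := (isKernel_pow hP (2*t)).1 s s'
    rw [hν]
    exact max_le (h2.trans h1) h0
  refine ⟨fun s' => ν s' / Z, ⟨fun s' => div_nonneg (hνnn s') hZpos.le, ?_⟩, ?_⟩
  · rw [← Finset.sum_div, ← hZdef, div_self hZpos.ne']
  · intro s s'
    have h1 : ν s' / Z ≤ 2 * ν s' := by
      rw [div_le_iff₀ hZpos]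
      nlinarith [hνnn s', hZ]
    have : 1/2 * (ν s' / Z) ≤ ν s' := by linarith
    exact this.trans (hlower s s')

end Aux3

/-- for a uniformly ergodic kernel `P`: (i) for every `ε > 0` there is a Doeblin
pair `(m',p')` with `m'/p' − ε ≤ t_minorize(P) ≤ m'/p' + ε`; and (ii)
`t_minorize(P) ≤ 22·t_mix(P) ≤ 22·log(16)·t_minorize(P)`. -/
theorem tminorize_tmix_equiv
    {S : Type*} [Fintype S] [Nonempty S] [DecidableEq S]
    (P : Matrix S S ℝ) (hP : IsKernel P)
    (η : S → ℝ) (hη : IsProb η) (hstat : ∀ s', ∑ s, η s * P s s' = η s')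
    (hUE : UnifErgodic P η) :
    (∀ ε : ℝ, 0 < ε → ∃ (m' : ℕ) (p' : ℝ), 0 < m' ∧ 0 < p' ∧ p' ≤ 1 ∧ Doeblin P m' p' ∧
      (m' : ℝ) / p' - ε ≤ tMinorize P ∧ tMinorize P ≤ (m' : ℝ) / p' + ε) ∧
    tMinorize P ≤ 22 * (tMix P η : ℝ) ∧
    22 * (tMix P η : ℝ) ≤ 22 * Real.log 16 * tMinorize P := by
  classical
  set T := {t : ℕ | 0 < t ∧ ∀ s, tvDist ((P ^ t) s) η ≤ 1 / 4} with hTdef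
  have hTne : T.Nonempty := by
    have h1 : ∀ᶠ n in atTop, (⨆ s, tvDist ((P ^ n) s) η) < 1/4 :=
      hUE.eventually (gt_mem_nhds (by norm_num))
    obtain ⟨n, hn1, hn0⟩ := (h1.and (eventually_gt_atTop 0)).exists
    refine ⟨n, hn0, fun s => ?_⟩
    have h2 := le_ciSup (f := fun s => tvDist ((P ^ n) s) η)
      (Set.Finite.bddAbove (Set.finite_range _)) s
    have h3 : (⨆ s, tvDist ((P ^ n) s) η) < 1/4 := hn1
    calc tvDist ((P ^ n) s) η ≤ ⨆ s, tvDist ((P ^ n) s) η := h2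
      _ ≤ 1/4 := h3.le
  have htmixT : tMix P η ∈ T := Nat.sInf_mem hTne
  obtain ⟨ht0, hmix⟩ := htmixT
  set t := tMix P η with htdef
  set D := {x : ℝ | ∃ (m : ℕ) (p : ℝ), 0 < m ∧ 0 < p ∧ p ≤ 1 ∧ Doeblin P m p ∧ x = ↑m / p}
    with hDdef
  have hEq : tMinorize P = sInf D := rfl
  have hDoeb : Doeblin P (2*t) (1/2) := doeblin_of_mix hP hη t hmix
  have hmemD : ((2*t : ℕ) : ℝ) / (1/2) ∈ D :=
    ⟨2*t, 1/2, by omega, by norm_num, by norm_num, hDoeb, rfl⟩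
  have hDne : D.Nonempty := ⟨_, hmemD⟩
  have hDlb : ∀ x ∈ D, (0:ℝ) ≤ x := by
    rintro x ⟨m, p, hm, hp, hp1, _, rfl⟩
    positivity
  have hbdd : BddBelow D := ⟨0, hDlb⟩
  have hlog4 : 1 ≤ Real.log 4 := by
    rw [Real.le_log_iff_exp_le (by norm_num)]
    have := Real.exp_one_lt_d9
    linarith
  have hlog16 : Real.log 16 = 2 * Real.log 4 := by
    rw [show (16:ℝ) = 4^2 by norm_num, Real.log_pow]
    push_cast; ring
  have hkey : ∀ x ∈ D, (t : ℝ) ≤ Real.log 16 * x := by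
    rintro x ⟨m, p, hm, hp, hp1, ⟨ψ, hψ, hmin⟩, rfl⟩
    set k := ⌈Real.log 4 / p⌉₊ with hk
    have hkpos : 0 < k := Nat.ceil_pos.mpr (by positivity)
    have hcontr : ∀ s, tvDist ((P ^ (k*m)) s) η ≤ (1-p)^k :=
      contraction hP hη hstat hp hp1 hψ hmin k
    have hppow : (1-p)^k ≤ 1/4 := by
      have h1 : (1-p)^k ≤ Real.exp (-p) ^ k := by
        apply pow_le_pow_left₀ (by linarith)
        have := Real.add_one_le_exp (-p)
        linarith
      have h2 : Real.exp (-p) ^ k = Real.exp (-(p * k)) := by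
        rw [← Real.exp_nat_mul]; ring_nf
      have h3 : Real.log 4 ≤ p * k := by
        have h := Nat.le_ceil (Real.log 4 / p)
        rw [div_le_iff₀ hp] at h
        calc Real.log 4 ≤ ↑⌈Real.log 4 / p⌉₊ * p := h
          _ = p * k := by rw [hk]; ring
      have h4 : Real.exp (-(p*(k:ℝ))) ≤ Real.exp (-(Real.log 4)) :=
        Real.exp_le_exp.mpr (by linarith)
      have h5 : Real.exp (-(Real.log 4)) = 1/4 := by
        rw [Real.exp_neg, Real.exp_log (by norm_num)]
        norm_num
      calc (1-p)^k ≤ Real.exp (-p)^k := h1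
        _ = Real.exp (-(p*(k:ℝ))) := h2
        _ ≤ Real.exp (-(Real.log 4)) := h4
        _ = 1/4 := h5
    have hTmem : k * m ∈ T := ⟨Nat.mul_pos hkpos hm, fun s => (hcontr s).trans hppow⟩
    have hle : t ≤ k * m := Nat.sInf_le hTmem
    have hkR : (k:ℝ) ≤ Real.log 4 / p + 1 := (Nat.ceil_lt_add_one (by positivity)).le
    have hmp : (m:ℝ) ≤ (m:ℝ)/p := le_div_self (by positivity) hp hp1
    have hcast : (t : ℝ) ≤ (k:ℝ) * m := by exact_mod_cast hle
    have hmnn : (0:ℝ) ≤ m := Nat.cast_nonneg m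
    have hdivnn : (0:ℝ) ≤ (m:ℝ)/p := by positivity
    calc (t : ℝ) ≤ (k:ℝ)*m := hcast
      _ ≤ (Real.log 4 / p + 1) * m := mul_le_mul_of_nonneg_right hkR hmnn
      _ = Real.log 4 * ((m:ℝ)/p) + m := by field_simp
      _ ≤ Real.log 4 * ((m:ℝ)/p) + (m:ℝ)/p := by linarith
      _ ≤ Real.log 16 * ((m:ℝ)/p) := by rw [hlog16]; nlinarith
  refine ⟨?_, ?_, ?_⟩
  · intro ε hε
    obtain ⟨x, hxD, hxlt⟩ := Real.lt_sInf_add_pos hDne hε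
    have hxin := hxD
    obtain ⟨m, p, hm, hp, hp1, hdoeb, rfl⟩ := hxin
    have hle1 : sInf D ≤ (m:ℝ)/p := csInf_le hbdd hxD
    exact ⟨m, p, hm, hp, hp1, hdoeb, by rw [hEq]; linarith, by rw [hEq]; linarith⟩
  · have h1 : sInf D ≤ ((2*t : ℕ) : ℝ)/(1/2) := csInf_le hbdd hmemD
    have h2 : ((2*t : ℕ) : ℝ)/(1/2) = 4*(t:ℝ) := by push_cast; ring
    have h3 : (0:ℝ) ≤ (t:ℝ) := Nat.cast_nonneg t
    rw [hEq]
    linarith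
  · have h1 : (t:ℝ) ≤ Real.log 16 * sInf D := by
      have hpos : 0 < Real.log 16 := by linarith [hlog16]
      have h2 : (t:ℝ)/Real.log 16 ≤ sInf D := by
        apply le_csInf hDne
        intro x hx
        rw [div_le_iff₀ hpos]
        linarith [hkey x hx]
      rw [← div_le_iff₀' hpos]
      exact h2
    rw [hEq]
    linarith
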